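/- Any polynomial that sign represents parity over {1,...,m}ⁿ has sparsity at least n(m−1) + 1. In particular, any polynomial sign representing parity over {1,2}ⁿ has sparsity at least n+1. -/

import Mathlib

open MvPolynomial

set_option maxHeartbeats 1000000

/-- A polynomial with at most `k` terms that vanishes at `k` (or more) distinct
positive reals has all coefficients zero (Descartes-type bound, via Rolle). -/
lemma sparse_roots_core : ∀ (k : ℕ) (A : Finset ℕ), A.card ≤ k → ∀ (c : ℕ → ℝ) (N : ℕ),
    A.card ≤ N → ∀ (r : Fin N → ℝ), StrictMono r → (∀ j, 0 < r j) →
    (∀ j, ∑ α ∈ A, c α * r j ^ α = 0) → ∀ α ∈ A, c α = 0 := by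
  intro k
  induction k with
  | zero =>
    intro A hA c N _ r _ _ _ α hα
    rw [Finset.card_eq_zero.mp (Nat.le_zero.mp hA)] at hα
    simp at hα
  | succ k ih =>
    intro A hA c N hAN r hr hrpos hroot
    rcases A.eq_empty_or_nonempty with rfl | hne
    · simp
    have hN1 : 1 ≤ N := le_trans (Finset.card_pos.mpr hne) hAN
    set α₀ := A.min' hne with hα₀
    have hα₀A : α₀ ∈ A := A.min'_mem hne
    have hmin : ∀ α ∈ A, α₀ ≤ α := fun α h => A.min'_le α h
    set B' : Finset ℕ := (A.erase α₀).image (fun α => α - (α₀ + 1)) with hB'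
    set d : ℕ → ℝ := fun β => c (β + (α₀ + 1)) * ((β : ℝ) + 1) with hd
    set g : ℝ → ℝ := fun x => ∑ α ∈ A, c α * x ^ (α - α₀) with hg
    -- derivative of g
    have hderiv : ∀ x : ℝ, HasDerivAt g (∑ β ∈ B', d β * x ^ β) x := by
      intro x
      have h1 : HasDerivAt g (∑ α ∈ A, c α * (((α - α₀ : ℕ) : ℝ) * x ^ (α - α₀ - 1))) x := by
        apply HasDerivAt.fun_sum
        intro α _
        exact (hasDerivAt_pow (α - α₀) x).const_mul (c α)
      convert h1 using 1
      have hinj : ∀ a ∈ A.erase α₀, ∀ b ∈ A.erase α₀,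
          a - (α₀ + 1) = b - (α₀ + 1) → a = b := by
        intro a ha b hb hab
        have ha' := (Finset.mem_erase.mp ha)
        have hb' := (Finset.mem_erase.mp hb)
        have h1 := hmin a ha'.2
        have h2 := hmin b hb'.2
        omega
      rw [hB', Finset.sum_image hinj]
      rw [← Finset.add_sum_erase A _ hα₀A]
      have hz : c α₀ * (((α₀ - α₀ : ℕ) : ℝ) * x ^ (α₀ - α₀ - 1)) = 0 := by simp
      rw [hz, zero_add]
      apply Finset.sum_congr rfl
      intro α hα
      have hα' := Finset.mem_erase.mp hα
      have hlt : α₀ < α := lt_of_le_of_ne (hmin α hα'.2) (Ne.symm hα'.1)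
      have e1 : α - (α₀ + 1) + (α₀ + 1) = α := by omega
      have e2 : α - (α₀ + 1) = α - α₀ - 1 := by omega
      have e3 : ((α - α₀ : ℕ) : ℝ) = ((α - α₀ - 1 : ℕ) : ℝ) + 1 := by
        have : α - α₀ = (α - α₀ - 1) + 1 := by omega
        rw [this]; push_cast; ring
      rw [hd]
      simp only []
      rw [e2]
      have e1' : α - α₀ - 1 + (α₀ + 1) = α := by omega
      rw [e1', e3]
      ring
    -- roots of g
    have hgroot : ∀ j, g (r j) = 0 := by
      intro j
      have hx : (0 : ℝ) < r j := hrpos j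
      have hmul : g (r j) * r j ^ α₀ = 0 := by
        rw [hg]
        simp only [Finset.sum_mul]
        rw [← hroot j]
        apply Finset.sum_congr rfl
        intro α hα
        rw [mul_assoc, ← pow_add]
        congr 2
        have := hmin α hα
        omega
      rcases mul_eq_zero.mp hmul with h | h
      · exact h
      · exact absurd h (pow_ne_zero _ (ne_of_gt hx))
    -- Rolle roots for the derivative
    have hEx : ∀ j : Fin (N - 1), ∃ x,
        x ∈ Set.Ioo (r ⟨j.1, by have := j.2; omega⟩) (r ⟨j.1 + 1, by have := j.2; omega⟩) ∧
        (∑ β ∈ B', d β * x ^ β) = 0 := by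
      intro j
      have hab : r ⟨j.1, by have := j.2; omega⟩ < r ⟨j.1 + 1, by have := j.2; omega⟩ := by
        apply hr; simp [Fin.lt_def]
      have hcont : ContinuousOn g (Set.Icc (r ⟨j.1, by have := j.2; omega⟩)
          (r ⟨j.1 + 1, by have := j.2; omega⟩)) := by
        apply Continuous.continuousOn
        rw [hg]; fun_prop
      obtain ⟨ξ, hmem, h0⟩ := exists_hasDerivAt_eq_zero hab hcont
        (by rw [hgroot, hgroot]) (fun x _ => hderiv x)
      exact ⟨ξ, hmem, h0⟩
    choose ξ hmem hξroot using hEx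
    have hξmono : StrictMono ξ := by
      intro i j hij
      have h1 : ξ i < r ⟨i.1 + 1, by have := i.2; omega⟩ := (hmem i).2
      have h2 : r ⟨j.1, by have := j.2; omega⟩ < ξ j := (hmem j).1
      have h3 : r ⟨i.1 + 1, by have := i.2; omega⟩ ≤ r ⟨j.1, by have := j.2; omega⟩ := by
        apply hr.monotone
        simp only [Fin.mk_le_mk]
        exact hij
      linarith
    have hξpos : ∀ j, 0 < ξ j := by
      intro j
      have := (hmem j).1
      have := hrpos ⟨j.1, by have := j.2; omega⟩
      linarith
    -- apply IH
    have hB'card : B'.card ≤ A.card - 1 := by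
      calc B'.card ≤ (A.erase α₀).card := Finset.card_image_le
        _ = A.card - 1 := Finset.card_erase_of_mem hα₀A
    have hd0 : ∀ β ∈ B', d β = 0 := by
      apply ih B' (by omega) d (N - 1) (by omega) ξ hξmono hξpos hξroot
    -- conclude
    have hcB : ∀ α ∈ A, α ≠ α₀ → c α = 0 := by
      intro α hα hne'
      have hlt : α₀ < α := lt_of_le_of_ne (hmin α hα) (Ne.symm hne')
      have hβ : α - (α₀ + 1) ∈ B' := by
        rw [hB']
        exact Finset.mem_image_of_mem _ (Finset.mem_erase.mpr ⟨hne', hα⟩)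
      have h2 : c (α - (α₀ + 1) + (α₀ + 1)) * ((↑(α - (α₀ + 1)) : ℝ) + 1) = 0 := hd0 _ hβ
      have he : α - (α₀ + 1) + (α₀ + 1) = α := by omega
      rw [he] at h2
      have this := h2
      have hpos : (0 : ℝ) < ((α - (α₀ + 1) : ℕ) : ℝ) + 1 := by positivity
      rcases mul_eq_zero.mp this with h | h
      · exact h
      · exact absurd h (ne_of_gt hpos)
    have hcα₀ : c α₀ = 0 := by
      have h := hroot ⟨0, by omega⟩
      rw [Finset.sum_eq_single_of_mem α₀ hα₀A
        (fun b hb hbne => by rw [hcB b hb hbne, zero_mul])] at h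
      rcases mul_eq_zero.mp h with h | h
      · exact h
      · exact absurd h (pow_ne_zero _ (ne_of_gt (hrpos _)))
    intro α hα
    by_cases hc : α = α₀
    · rw [hc]; exact hcα₀
    · exact hcB α hα hc

lemma sparse_roots' (A : Finset ℕ) (c : ℕ → ℝ) (T : Finset ℝ) (hpos : ∀ x ∈ T, 0 < x)
    (hcard : A.card ≤ T.card) (hroot : ∀ x ∈ T, ∑ α ∈ A, c α * x ^ α = 0) :
    ∀ α ∈ A, c α = 0 := by
  have hmono : StrictMono (T.orderEmbOfFin rfl) := (T.orderEmbOfFin rfl).strictMono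
  apply sparse_roots_core A.card A le_rfl c T.card hcard (T.orderEmbOfFin rfl) hmono
  · intro j; exact hpos _ (Finset.orderEmbOfFin_mem T rfl j)
  · intro j; exact hroot _ (Finset.orderEmbOfFin_mem T rfl j)

lemma interp' (A : Finset ℕ) (T : Finset ℝ) (hcard : A.card = T.card)
    (hpos : ∀ x ∈ T, 0 < x) (y : ℝ → ℝ) :
    ∃ c : ℕ → ℝ, (∀ α, α ∉ A → c α = 0) ∧ ∀ x ∈ T, ∑ α ∈ A, c α * x ^ α = y x := by
  classical
  set L : (↥A → ℝ) →ₗ[ℝ] (↥T → ℝ) :=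
    { toFun := fun cc x => ∑ α ∈ A.attach, cc α * (x : ℝ) ^ (α : ℕ)
      map_add' := by
        intro a b; funext x; simp [add_mul, Finset.sum_add_distrib]
      map_smul' := by
        intro s a; funext x; simp [Finset.mul_sum, mul_assoc] } with hL
  have hinj : Function.Injective L := by
    rw [← LinearMap.ker_eq_bot, LinearMap.ker_eq_bot']
    intro cc hcc
    set c : ℕ → ℝ := fun α => if h : α ∈ A then cc ⟨α, h⟩ else 0 with hc
    have h0 : ∀ α ∈ A, c α = 0 := by
      apply sparse_roots' A c T hpos (le_of_eq hcard)
      intro x hx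
      have h1 : ∑ α ∈ A, c α * x ^ α = ∑ α ∈ A.attach, cc α * x ^ (α : ℕ) := by
        rw [← Finset.sum_attach A (fun α => c α * x ^ α)]
        exact Finset.sum_congr rfl fun α _ => by simp [hc, α.2]
      rw [h1]
      exact congrFun hcc ⟨x, hx⟩
    funext α
    have := h0 α α.2
    simpa [hc, α.2] using this
  have hdim : Module.finrank ℝ (↥A → ℝ) = Module.finrank ℝ (↥T → ℝ) := by
    simp only [Module.finrank_pi, Fintype.card_coe]
    exact hcard
  have hsurj : Function.Surjective L :=
    (LinearMap.injective_iff_surjective_of_finrank_eq_finrank hdim).mp hinj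
  obtain ⟨cc, hcc⟩ := hsurj (fun x => y x)
  refine ⟨fun α => if h : α ∈ A then cc ⟨α, h⟩ else 0, fun α hα => by simp [hα], fun x hx => ?_⟩
  have h1 : ∑ α ∈ A, (if h : α ∈ A then cc ⟨α, h⟩ else 0) * x ^ α
      = ∑ α ∈ A.attach, cc α * x ^ (α : ℕ) := by
    rw [← Finset.sum_attach A (fun α => (if h : α ∈ A then cc ⟨α, h⟩ else 0) * x ^ α)]
    exact Finset.sum_congr rfl fun α _ => by simp [α.2]
  rw [h1]
  exact congrFun hcc ⟨x, hx⟩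

/-- Alternating positive weights on `{1,…,m}` annihilating `m-1` prescribed powers. -/
lemma altweights (m : ℕ) (hm : 1 ≤ m) (A : Finset ℕ) (hA : A.card ≤ m - 1) :
    ∃ w : ℕ → ℝ, (∀ t ∈ Finset.Icc 1 m, 0 < (-1 : ℝ) ^ t * w t) ∧
      (∀ α ∈ A, ∑ t ∈ Finset.Icc 1 m, w t * (t : ℝ) ^ α = 0) := by
  classical
  obtain ⟨A', hAA', hA'card⟩ := Infinite.exists_superset_card_eq A (m - 1) hA
  set T : Finset ℕ := Finset.Icc 1 m with hT
  have hTcard : T.card = m := by rw [hT, Nat.card_Icc]; omega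
  have hT1 : ∀ t ∈ T, 1 ≤ t := fun t ht => (Finset.mem_Icc.mp ht).1
  have hTm : ∀ t ∈ T, t ≤ m := fun t ht => (Finset.mem_Icc.mp ht).2
  set L : (↥T → ℝ) →ₗ[ℝ] (↥A' → ℝ) :=
    { toFun := fun lam α => ∑ t ∈ T.attach, lam t * ((t : ℕ) : ℝ) ^ (α : ℕ)
      map_add' := by intro a b; funext α; simp [add_mul, Finset.sum_add_distrib]
      map_smul' := by intro s a; funext α; simp [Finset.mul_sum, mul_assoc] } with hL
  have hnotinj : ¬ Function.Injective L := by
    intro hinj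
    have := LinearMap.finrank_le_finrank_of_injective hinj
    simp only [Module.finrank_pi, Fintype.card_coe, hTcard, hA'card] at this
    omega
  rw [Function.not_injective_iff] at hnotinj
  obtain ⟨a, b, hab, habne⟩ := hnotinj
  set lam : ↥T → ℝ := a - b with hlam
  have hlamne : lam ≠ 0 := sub_ne_zero_of_ne habne
  have hL0 : L lam = 0 := by rw [hlam, map_sub, hab, sub_self]
  have key : ∀ α ∈ A', ∑ t ∈ T.attach, lam t * ((t : ℕ) : ℝ) ^ α = 0 := by
    intro α hα
    exact congrFun hL0 ⟨α, hα⟩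
  have hswap : ∀ c : ℕ → ℝ,
      ∑ t ∈ T.attach, lam t * (∑ α ∈ A', c α * ((t : ℕ) : ℝ) ^ α) = 0 := by
    intro c
    have h1 : ∑ t ∈ T.attach, lam t * (∑ α ∈ A', c α * ((t : ℕ) : ℝ) ^ α)
        = ∑ α ∈ A', c α * (∑ t ∈ T.attach, lam t * ((t : ℕ) : ℝ) ^ α) := by
      simp only [Finset.mul_sum]
      rw [Finset.sum_comm]
      exact Finset.sum_congr rfl fun α _ => Finset.sum_congr rfl fun t _ => by ring
    rw [h1]
    exact Finset.sum_eq_zero fun α hα => by rw [key α hα, mul_zero]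
  -- all entries nonzero
  have hne0 : ∀ t : ↥T, lam t ≠ 0 := by
    intro t0 h0
    apply hlamne
    funext t1
    simp only [Pi.zero_apply]
    by_cases h : t1 = t0
    · rw [h]; exact h0
    · set Tr : Finset ℝ := (T.erase ↑t0).image (fun s : ℕ => (s : ℝ)) with hTr
      have hTrcard : A'.card = Tr.card := by
        rw [hTr, Finset.card_image_of_injective _ Nat.cast_injective,
          Finset.card_erase_of_mem t0.2, hTcard, hA'card]
      have hTrpos : ∀ x ∈ Tr, 0 < x := by
        intro x hx
        obtain ⟨s, hs, rfl⟩ := Finset.mem_image.mp hx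
        have hs1 := hT1 s (Finset.mem_of_mem_erase hs)
        exact_mod_cast Nat.lt_of_lt_of_le Nat.zero_lt_one hs1
      obtain ⟨c, _, hcval⟩ := interp' A' Tr hTrcard hTrpos
        (fun x => if x = ((t1 : ℕ) : ℝ) then 1 else 0)
      have hsum := hswap c
      have ht1Tr : ((t1 : ℕ) : ℝ) ∈ Tr := by
        apply Finset.mem_image_of_mem
        exact Finset.mem_erase.mpr ⟨fun hh => h (Subtype.ext hh), t1.2⟩
      rw [Finset.sum_eq_single_of_mem t1 (Finset.mem_attach T t1) ?zero] at hsum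
      · rw [hcval _ ht1Tr] at hsum
        simpa using hsum
      case zero =>
        intro t ht htne
        by_cases hcase : t = t0
        · rw [hcase, h0, zero_mul]
        · have hmem : ((t : ℕ) : ℝ) ∈ Tr := by
            apply Finset.mem_image_of_mem
            exact Finset.mem_erase.mpr ⟨fun hh => hcase (Subtype.ext hh), t.2⟩
          rw [hcval _ hmem, if_neg, mul_zero]
          intro hh
          exact htne (Subtype.ext (Nat.cast_injective hh))
  -- consecutive entries have opposite signs
  have halt : ∀ (t : ℕ) (h1 : t ∈ T) (h2 : t + 1 ∈ T),
      lam ⟨t, h1⟩ * lam ⟨t + 1, h2⟩ < 0 := by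
    intro t h1 h2
    rcases lt_trichotomy (lam ⟨t, h1⟩ * lam ⟨t + 1, h2⟩) 0 with hlt | heq | hgt
    · exact hlt
    · exact absurd heq (mul_ne_zero (hne0 _) (hne0 _))
    · exfalso
      have htge : 1 ≤ t := hT1 t h1
      have htle : t + 1 ≤ m := hTm _ h2
      set Tr : Finset ℝ := (T.erase (t + 1)).image (fun s : ℕ => (s : ℝ)) with hTr
      have hTrcard : A'.card = Tr.card := by
        rw [hTr, Finset.card_image_of_injective _ Nat.cast_injective,
          Finset.card_erase_of_mem h2, hTcard, hA'card]
      have hTrpos : ∀ x ∈ Tr, 0 < x := by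
        intro x hx
        obtain ⟨s, hs, rfl⟩ := Finset.mem_image.mp hx
        have hs1 := hT1 s (Finset.mem_of_mem_erase hs)
        exact_mod_cast Nat.lt_of_lt_of_le Nat.zero_lt_one hs1
      obtain ⟨c, _, hcval⟩ := interp' A' Tr hTrcard hTrpos
        (fun x => if x = ((t : ℕ) : ℝ) then 1 else 0)
      have hqt : ∑ α ∈ A', c α * ((t : ℕ) : ℝ) ^ α = 1 := by
        have hmem : ((t : ℕ) : ℝ) ∈ Tr := by
          apply Finset.mem_image_of_mem
          exact Finset.mem_erase.mpr ⟨by omega, h1⟩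
        rw [hcval _ hmem]; simp
      have hqother : ∀ s ∈ T, s ≠ t → s ≠ t + 1 →
          ∑ α ∈ A', c α * ((s : ℕ) : ℝ) ^ α = 0 := by
        intro s hs hst hst1
        have hmem : ((s : ℕ) : ℝ) ∈ Tr :=
          Finset.mem_image_of_mem _ (Finset.mem_erase.mpr ⟨hst1, hs⟩)
        rw [hcval _ hmem, if_neg]
        exact fun hh => hst (Nat.cast_injective hh)
      have hsum := hswap c
      set tt : ↥T := ⟨t, h1⟩ with htt
      set tt1 : ↥T := ⟨t + 1, h2⟩ with htt1
      have hsplit : ∑ s ∈ T.attach, lam s * (∑ α ∈ A', c α * ((s : ℕ) : ℝ) ^ α)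
          = lam tt * (∑ α ∈ A', c α * ((t : ℕ) : ℝ) ^ α)
            + lam tt1 * (∑ α ∈ A', c α * (((t + 1 : ℕ)) : ℝ) ^ α) := by
        rw [← Finset.add_sum_erase _ _ (Finset.mem_attach T tt)]
        rw [← Finset.add_sum_erase _ _
          (Finset.mem_erase.mpr ⟨by simp [htt, htt1], Finset.mem_attach T tt1⟩)]
        have hrest : ∑ s ∈ (T.attach.erase tt).erase tt1,
            lam s * (∑ α ∈ A', c α * ((s : ℕ) : ℝ) ^ α) = 0 := by
          apply Finset.sum_eq_zero
          intro s hs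
          have h3 := Finset.mem_erase.mp hs
          have h4 := Finset.mem_erase.mp h3.2
          rw [hqother s s.2 (fun hh => h4.1 (Subtype.ext hh))
            (fun hh => h3.1 (Subtype.ext hh)), mul_zero]
        rw [hrest, add_zero]
      rw [hsplit, hqt, mul_one] at hsum
      -- hsum : lam tt + lam tt1 * Q = 0, with lam tt * lam tt1 > 0
      set Q : ℝ := ∑ α ∈ A', c α * (((t + 1 : ℕ)) : ℝ) ^ α with hQdef
      have hv2 : 0 < lam tt1 * lam tt1 := mul_self_pos.mpr (hne0 tt1)
      have h5 : lam tt1 * Q = -lam tt := by linarith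
      have h6 : (lam tt1 * lam tt1) * Q = -(lam tt * lam tt1) := by
        calc (lam tt1 * lam tt1) * Q = lam tt1 * (lam tt1 * Q) := by ring
        _ = lam tt1 * (-lam tt) := by rw [h5]
        _ = -(lam tt * lam tt1) := by ring
      have hQneg : Q < 0 := by nlinarith [h6, hgt, hv2]
      -- IVT gives a root strictly between t and t+1
      have hcont : Continuous (fun x : ℝ => ∑ α ∈ A', c α * x ^ α) := by
        apply continuous_finset_sum
        intro α _
        exact continuous_const.mul (continuous_pow α)
      have hstep : ((t : ℕ) : ℝ) ≤ (((t + 1 : ℕ)) : ℝ) := by push_cast; linarith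
      have h0mem : (0 : ℝ) ∈ Set.Ioo Q (∑ α ∈ A', c α * ((t : ℕ) : ℝ) ^ α) := by
        constructor
        · exact hQneg
        · rw [hqt]; norm_num
      obtain ⟨ξ, hξmem, hξ0⟩ :=
        (intermediate_value_Ioo' hstep hcont.continuousOn) h0mem
      set R : Finset ℝ :=
        insert ξ (((T.erase (t + 1)).erase t).image (fun s : ℕ => (s : ℝ))) with hR
      have hξlt : ((t : ℕ) : ℝ) < ξ := hξmem.1
      have hξgt : ξ < (((t + 1 : ℕ)) : ℝ) := hξmem.2
      have hξnot : ξ ∉ ((T.erase (t + 1)).erase t).image (fun s : ℕ => (s : ℝ)) := by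
        intro hmem
        obtain ⟨s, hs, hcast⟩ := Finset.mem_image.mp hmem
        have h3 := Finset.mem_erase.mp hs
        have h4 := Finset.mem_erase.mp h3.2
        have hcases : s < t ∨ t + 2 ≤ s := by
          have := h3.1; have := h4.1; omega
        rcases hcases with hcase | hcase
        · have : (s : ℝ) < ((t : ℕ) : ℝ) := by exact_mod_cast hcase
          rw [hcast] at this
          linarith
        · have : (((t + 1 : ℕ)) : ℝ) < (s : ℝ) := by exact_mod_cast (by omega : t + 1 < s)
          rw [hcast] at this
          linarith
      have hRcard : A'.card ≤ R.card := by
        rw [hR, Finset.card_insert_of_notMem hξnot,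
          Finset.card_image_of_injective _ Nat.cast_injective,
          Finset.card_erase_of_mem (Finset.mem_erase.mpr ⟨by omega, h1⟩),
          Finset.card_erase_of_mem h2, hTcard, hA'card]
        omega
      have hRpos : ∀ x ∈ R, 0 < x := by
        intro x hx
        rcases Finset.mem_insert.mp hx with rfl | hx
        · have h5 : (0 : ℝ) < ((t : ℕ) : ℝ) := by exact_mod_cast htge
          linarith
        · obtain ⟨s, hs, rfl⟩ := Finset.mem_image.mp hx
          have hs1 := hT1 s (Finset.mem_of_mem_erase (Finset.mem_of_mem_erase hs))
          exact_mod_cast Nat.lt_of_lt_of_le Nat.zero_lt_one hs1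
      have hRroot : ∀ x ∈ R, ∑ α ∈ A', c α * x ^ α = 0 := by
        intro x hx
        rcases Finset.mem_insert.mp hx with rfl | hx
        · exact hξ0
        · obtain ⟨s, hs, rfl⟩ := Finset.mem_image.mp hx
          have h3 := Finset.mem_erase.mp hs
          have h4 := Finset.mem_erase.mp h3.2
          exact hqother s h4.2 h3.1 h4.1
      have hc0 := sparse_roots' A' c R hRpos hRcard hRroot
      have hone : (1 : ℝ) = 0 := by
        rw [← hqt]
        exact Finset.sum_eq_zero fun α hα => by rw [hc0 α hα, zero_mul]
      norm_num at hone
  -- propagate signs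
  have h1m : (1 : ℕ) ∈ T := Finset.mem_Icc.mpr ⟨le_refl 1, hm⟩
  set ε : ℝ := if 0 < -lam ⟨1, h1m⟩ then 1 else -1 with hε
  have hsign : ∀ t, 1 ≤ t → ∀ ht : t ∈ T, 0 < ε * (-1 : ℝ) ^ t * lam ⟨t, ht⟩ := by
    intro t h1t
    induction t, h1t using Nat.le_induction with
    | base =>
      intro ht
      have hne := hne0 ⟨1, h1m⟩
      by_cases h : 0 < -lam ⟨1, h1m⟩
      · rw [hε, if_pos h]
        have : lam ⟨1, ht⟩ = lam ⟨1, h1m⟩ := rfl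
        rw [this]
        norm_num
        linarith
      · rw [hε, if_neg h]
        push_neg at h
        have hpos : 0 < lam ⟨1, h1m⟩ := by
          rcases lt_trichotomy (lam ⟨1, h1m⟩) 0 with hc | hc | hc
          · exfalso; apply absurd h; push_neg; linarith
          · exact absurd hc hne
          · exact hc
        have : lam ⟨1, ht⟩ = lam ⟨1, h1m⟩ := rfl
        rw [this]
        norm_num
        linarith
    | succ t h1t ih =>
      intro ht
      have htT : t ∈ T := by
        rw [hT, Finset.mem_Icc]
        have := hTm _ ht
        omega
      have hprev := ih htT
      have hopp := halt t htT ht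
      have h2 : ((-1 : ℝ)) ^ (t + 1) = -(-1 : ℝ) ^ t := by rw [pow_succ]; ring
      rw [h2]
      nlinarith [hprev, hopp, mul_self_pos.mpr (hne0 ⟨t, htT⟩)]
  -- package
  refine ⟨fun t => if h : t ∈ T then ε * lam ⟨t, h⟩ else 0, ?_, ?_⟩
  · intro t ht
    show 0 < (-1 : ℝ) ^ t * (if h : t ∈ T then ε * lam ⟨t, h⟩ else 0)
    rw [dif_pos ht]
    have h8 := hsign t (hT1 t ht) ht
    have h7 : (-1 : ℝ) ^ t * (ε * lam ⟨t, ht⟩) = ε * (-1 : ℝ) ^ t * lam ⟨t, ht⟩ := by ring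
    rw [h7]
    exact h8
  · intro α hα
    show (∑ t ∈ T, (if h : t ∈ T then ε * lam ⟨t, h⟩ else 0) * (t : ℝ) ^ α) = 0
    have hkey := key α (hAA' hα)
    have e1 : ∑ t ∈ T, (if h : t ∈ T then ε * lam ⟨t, h⟩ else 0) * (t : ℝ) ^ α
        = ∑ t ∈ T.attach, ε * lam t * ((t : ℕ) : ℝ) ^ α := by
      rw [← Finset.sum_attach T
        (fun t => (if h : t ∈ T then ε * lam ⟨t, h⟩ else 0) * (t : ℝ) ^ α)]
      exact Finset.sum_congr rfl fun t _ => by rw [dif_pos t.2]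
    rw [e1]
    have e2 : ∑ t ∈ T.attach, ε * lam t * ((t : ℕ) : ℝ) ^ α
        = ε * ∑ t ∈ T.attach, lam t * ((t : ℕ) : ℝ) ^ α := by
      rw [Finset.mul_sum]
      exact Finset.sum_congr rfl fun t _ => by ring
    rw [e2, hkey, mul_zero]

/-- `P` sign represents the parity function over `A^n`. -/
def SignRepParity (n : ℕ) (A : Finset ℕ) (P : MvPolynomial (Fin n) ℝ) : Prop :=
  ∀ a : Fin n → ℕ, (∀ i, a i ∈ A) →
    (Even (∑ i, a i) → 0 < MvPolynomial.eval (fun i => (a i : ℝ)) P) ∧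
    (Odd (∑ i, a i) → MvPolynomial.eval (fun i => (a i : ℝ)) P < 0)

theorem parity_signrep_general_sparsity_lower (n m : ℕ) (hm : 1 ≤ m)
    (P : MvPolynomial (Fin n) ℝ)
    (hrep : SignRepParity n (Finset.Icc 1 m) P) :
    n * (m - 1) + 1 ≤ P.support.card := by
  classical
  by_contra hcon
  push_neg at hcon
  have hcard : P.support.card ≤ n * (m - 1) := by omega
  -- a balanced assignment of monomials to coordinates
  have hemb : Nonempty (↥P.support ↪ Fin n × Fin (m - 1)) := by
    apply Function.Embedding.nonempty_of_card_le
    simpa [Fintype.card_coe] using hcard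
  obtain ⟨e⟩ := hemb
  set S := P.support with hS
  set A : Fin n → Finset ℕ := fun i =>
    (Finset.univ.filter (fun α : ↥S => (e α).1 = i)).image
      (fun α : ↥S => (α : Fin n →₀ ℕ) i) with hA
  have hAcard : ∀ i, (A i).card ≤ m - 1 := by
    intro i
    calc (A i).card ≤ (Finset.univ.filter (fun α : ↥S => (e α).1 = i)).card :=
          Finset.card_image_le
      _ ≤ (Finset.univ : Finset (Fin (m - 1))).card := by
          apply Finset.card_le_card_of_injOn (fun α => (e α).2)
          · intro α _; exact Finset.mem_univ _
          · intro α hα β hβ hab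
            have h1 := (Finset.mem_filter.mp hα).2
            have h2 := (Finset.mem_filter.mp hβ).2
            apply e.injective
            apply Prod.ext
            · rw [h1, h2]
            · exact hab
      _ = m - 1 := by simp
  choose w hwpos hwzero using fun i => altweights m hm (A i) (hAcard i)
  set G := Fintype.piFinset (fun _ : Fin n => Finset.Icc 1 m) with hG
  set Λ : ℝ := ∑ a ∈ G, (∏ i, w i (a i)) * eval (fun i => ((a i : ℕ) : ℝ)) P with hΛ
  -- positivity
  have hpos : 0 < Λ := by
    rw [hΛ]
    apply Finset.sum_pos
    · intro a ha
      have hmem : ∀ i, a i ∈ Finset.Icc 1 m := Fintype.mem_piFinset.mp ha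
      have h1 : 0 < ∏ i, ((-1 : ℝ) ^ (a i) * w i (a i)) :=
        Finset.prod_pos fun i _ => hwpos i (a i) (hmem i)
      have h2 : ∏ i, ((-1 : ℝ) ^ (a i) * w i (a i))
          = (-1 : ℝ) ^ (∑ i, a i) * ∏ i, w i (a i) := by
        rw [Finset.prod_mul_distrib, Finset.prod_pow_eq_pow_sum]
      rw [h2] at h1
      have h3 : 0 < (-1 : ℝ) ^ (∑ i, a i) * eval (fun i => ((a i : ℕ) : ℝ)) P := by
        rcases Nat.even_or_odd (∑ i, a i) with hpar | hpar
        · rw [hpar.neg_one_pow, one_mul]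
          exact (hrep a hmem).1 hpar
        · rw [hpar.neg_one_pow]
          have := (hrep a hmem).2 hpar
          linarith
      have h4 : ((-1 : ℝ) ^ (∑ i, a i)) * ((-1 : ℝ) ^ (∑ i, a i)) = 1 := by
        rw [← pow_add]
        exact Even.neg_one_pow ⟨∑ i, a i, by ring⟩
      nlinarith [h1, h3, h4]
    · rw [hG]
      rw [Fintype.piFinset_nonempty]
      intro i
      exact ⟨1, Finset.mem_Icc.mpr ⟨le_refl 1, hm⟩⟩
  -- vanishing
  have hzero : Λ = 0 := by
    rw [hΛ]
    have hexp : ∀ a : Fin n → ℕ, (∏ i, w i (a i)) * eval (fun i => ((a i : ℕ) : ℝ)) P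
        = ∑ α ∈ S, coeff α P * ∏ i, (w i (a i) * ((a i : ℕ) : ℝ) ^ (α i)) := by
      intro a
      rw [eval_eq']
      rw [Finset.mul_sum]
      apply Finset.sum_congr rfl
      intro α _
      rw [Finset.prod_mul_distrib]
      ring
    rw [Finset.sum_congr rfl fun a _ => hexp a]
    rw [Finset.sum_comm]
    apply Finset.sum_eq_zero
    intro α hα
    have hprod : ∑ a ∈ G, ∏ i, (w i (a i) * ((a i : ℕ) : ℝ) ^ (α i))
        = ∏ i, ∑ t ∈ Finset.Icc 1 m, (w i t * (t : ℝ) ^ (α i)) :=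
      (Finset.prod_univ_sum (fun _ : Fin n => Finset.Icc 1 m)
        (fun i t => w i t * (t : ℝ) ^ (α i))).symm
    rw [← Finset.mul_sum, hprod]
    have hi0 : (α (e ⟨α, hα⟩).1) ∈ A (e ⟨α, hα⟩).1 := by
      show (α (e ⟨α, hα⟩).1) ∈ Finset.image (fun β : ↥S => (β : Fin n →₀ ℕ) ((e ⟨α, hα⟩).1))
        (Finset.filter (fun β : ↥S => (e β).1 = (e ⟨α, hα⟩).1) Finset.univ)
      have hmemf : (⟨α, hα⟩ : ↥S) ∈
          Finset.filter (fun β : ↥S => (e β).1 = (e ⟨α, hα⟩).1) Finset.univ :=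
        Finset.mem_filter.mpr ⟨Finset.mem_univ _, rfl⟩
      exact Finset.mem_image_of_mem (fun β : ↥S => (β : Fin n →₀ ℕ) ((e ⟨α, hα⟩).1)) hmemf
    rw [Finset.prod_eq_zero (Finset.mem_univ (e ⟨α, hα⟩).1) (hwzero _ _ hi0), mul_zero]
  rw [hzero] at hpos
  exact lt_irrefl 0 hpos
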